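/- arXiv:2203.12765 — 3 statements merged into one kernel-verified Lean document; each statement's English description precedes it below -/
import Mathlib

section
/- Let X be a Banach space and τ a coarser Hausdorff locally convex topology on X such that the τ-continuous dual (X,τ)' is norming for X. Then a sequence (x_n) in X converges in the mixed topology γ = γ(‖·‖, τ) if and only if it converges in τ and is norm-bounded. -/
noncomputable section

open Filter Topology

/-- The norm dual `X' = X →L[ℝ] ℝ` of `X` (with the operator norm); the topology on `X`
here is the norm topology, irrespective of any other topology in scope. -/
abbrev wDualR (X : Type*) [NormedAddCommGroup X] [NormedSpace ℝ X] : Type _ := X →L[ℝ] ℝ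

/-- A sequence is Cauchy with respect to a given (group) topology `t`. -/
def SeqCauchyIn {X : Type*} [AddCommGroup X] (t : TopologicalSpace X) (u : ℕ → X) : Prop :=
  ∀ U ∈ @nhds X t 0, ∃ N : ℕ, ∀ m ≥ N, ∀ n ≥ N, u m - u n ∈ U

/-- `γ` is the mixed topology `γ(‖·‖, τ)`: the finest linear topology agreeing with `τ` on
norm-bounded sets and lying between `τ` and the norm topology. -/
structure IsMixedTopology (X : Type*) [NormedAddCommGroup X] [NormedSpace ℝ X]
    (τ γ : TopologicalSpace X) : Prop where
  le_tau : γ ≤ τ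
  norm_le : (UniformSpace.toTopologicalSpace : TopologicalSpace X) ≤ γ
  addGroup : @IsTopologicalAddGroup X γ _
  contSMul : @ContinuousSMul ℝ X _ _ γ
  agrees : ∀ B : Set X, Bornology.IsBounded B →
    TopologicalSpace.induced ((↑) : B → X) γ = TopologicalSpace.induced ((↑) : B → X) τ
  finest : ∀ γ' : TopologicalSpace X, @IsTopologicalAddGroup X γ' _ →
    @ContinuousSMul ℝ X _ _ γ' →
    (UniformSpace.toTopologicalSpace : TopologicalSpace X) ≤ γ' → γ' ≤ τ →
    (∀ B : Set X, Bornology.IsBounded B →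
      TopologicalSpace.induced ((↑) : B → X) γ' = TopologicalSpace.induced ((↑) : B → X) τ) →
    γ ≤ γ'

/-- A topology `t` on `X` makes `X` a Mazur space if every `t`-sequentially continuous linear
functional is `t`-continuous. -/
def MazurIn (X : Type*) [NormedAddCommGroup X] [NormedSpace ℝ X]
    (t : TopologicalSpace X) : Prop :=
  ∀ f : X →ₗ[ℝ] ℝ,
    (∀ (u : ℕ → X) (x : X), Filter.Tendsto u Filter.atTop (@nhds X t x) →
      Filter.Tendsto (fun n => f (u n)) Filter.atTop (nhds (f x))) →
    @Continuous X ℝ t _ ⇑f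

/-- `(X, ‖·‖, τ)` is a Saks space: `τ` is generated by a directed family of seminorms `p`
with `‖x‖ = sup_i p i x`. -/
def IsSaksSpace (X : Type*) [NormedAddCommGroup X] [NormedSpace ℝ X]
    (τ : TopologicalSpace X) : Prop :=
  ∃ (ι : Type) (hι : Nonempty ι) (p : SeminormFamily ℝ X ι),
    Directed (· ≤ ·) p ∧ @WithSeminorms ℝ X ι _ _ _ p τ ∧
    ∀ x : X, IsLUB (Set.range fun i => p i x) ‖x‖

/-- Auxiliary: a norm-nonincreasing linear map into bounded functions is continuous for the
norm topologies. -/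
lemma mixedAux_T_cont {X : Type*} [NormedAddCommGroup X] [NormedSpace ℝ X]
    (T : X →ₗ[ℝ] BoundedContinuousFunction ℕ ℝ) (h : ∀ x, ‖T x‖ ≤ ‖x‖) :
    Continuous ⇑T :=
  AddMonoidHomClass.continuous_of_bound T 1 (fun x => by simpa using h x)

/-- Auxiliary: the topology `τ ⊓ (induced by T)` agrees with `τ` on norm-bounded sets, where
`T x k = a k * f k x` with `a k → 0` and `f k` τ-continuous with `|f k x| ≤ ‖x‖`. -/
lemma mixedAux_agree {X : Type*} [NormedAddCommGroup X] [NormedSpace ℝ X]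
    (τ : TopologicalSpace X) (haddgrp : @IsTopologicalAddGroup X τ _)
    (a : ℕ → ℝ) (f : ℕ → wDualR X) (hfc : ∀ k, @Continuous X ℝ τ _ ⇑(f k))
    (ha0 : ∀ k, 0 ≤ a k) (hale : ∀ k, a k ≤ ((k : ℝ) + 1)⁻¹)
    (habs : ∀ (x : X) (k : ℕ), |f k x| ≤ ‖x‖)
    (T : X →ₗ[ℝ] BoundedContinuousFunction ℕ ℝ)
    (hTapp : ∀ (x : X) (k : ℕ), T x k = a k * f k x)
    (B : Set X) (hB : Bornology.IsBounded B) :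
    TopologicalSpace.induced ((↑) : B → X)
        (τ ⊓ TopologicalSpace.induced (⇑T) inferInstance)
      = TopologicalSpace.induced ((↑) : B → X) τ := by
  rw [induced_inf, inf_eq_left, induced_compose]
  have hcont : Continuous (⇑T ∘ ((↑) : B → X)) := by
    obtain ⟨R, hR⟩ := hB.exists_norm_le
    set R' : ℝ := max R 0 with hR'
    have hR'0 : 0 ≤ R' := le_max_right _ _
    have hRB : ∀ x ∈ B, ‖x‖ ≤ R' := fun x hx => (hR x hx).trans (le_max_left _ _)
    rw [continuous_iff_continuousAt]
    intro b
    rw [ContinuousAt, nhds_subtype_eq_comap]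
    rw [Metric.tendsto_nhds]
    intro ε hε
    obtain ⟨K, hK⟩ := exists_nat_gt (2 * R' / (ε / 2))
    have hev : ∀ᶠ y in @nhds X τ ↑b, ∀ k ∈ Finset.range K,
        a k * |f k (y - ↑b)| < ε / 2 := by
      rw [Filter.eventually_all_finset]
      intro k _
      have hcont : @Continuous X ℝ τ _ (fun y => a k * |f k (y - (↑b : X))|) := by
        haveI := haddgrp
        exact continuous_const.mul (continuous_abs.comp
          ((hfc k).comp (continuous_id.sub continuous_const)))
      have ht := hcont.tendsto (↑b : X)
      have hval : a k * |f k ((↑b : X) - ↑b)| = 0 := by simp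
      rw [hval] at ht
      exact ht.eventually_lt_const (by positivity)
    have hev2 := hev.comap ((↑) : B → X)
    filter_upwards [hev2] with x hx
    have hle : ‖T ((↑x : X) - ↑b)‖ ≤ ε / 2 := by
      rw [BoundedContinuousFunction.norm_le (by positivity)]
      intro k
      rw [hTapp, Real.norm_eq_abs, abs_mul, abs_of_nonneg (ha0 k)]
      by_cases hk : k < K
      · exact (hx k (Finset.mem_range.2 hk)).le
      · push_neg at hk
        have h1 : |f k ((↑x : X) - ↑b)| ≤ 2 * R' := by
          refine (habs _ k).trans ?_
          calc ‖(↑x : X) - ↑b‖ ≤ ‖(↑x : X)‖ + ‖(↑b : X)‖ := norm_sub_le _ _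
            _ ≤ R' + R' := add_le_add (hRB _ x.2) (hRB _ b.2)
            _ = 2 * R' := by ring
        have h2 : a k * |f k ((↑x : X) - ↑b)| ≤ ((k : ℝ) + 1)⁻¹ * (2 * R') :=
          mul_le_mul (hale k) h1 (abs_nonneg _) (by positivity)
        refine h2.trans ?_
        rw [inv_mul_le_iff₀ (by positivity)]
        have hkK : (K : ℝ) ≤ (k : ℝ) := Nat.cast_le.2 hk
        have hlt : 2 * R' / (ε / 2) < (k : ℝ) + 1 := by linarith
        have hε2 : (0:ℝ) < ε / 2 := by linarith
        have h3 : 2 * R' < ((k : ℝ) + 1) * (ε / 2) := (div_lt_iff₀ hε2).mp hlt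
        nlinarith [h3]
    calc dist ((⇑T ∘ ((↑) : B → X)) x) ((⇑T ∘ ((↑) : B → X)) b)
        = ‖T ↑x - T ↑b‖ := dist_eq_norm _ _
      _ = ‖T ((↑x : X) - ↑b)‖ := by rw [map_sub]
      _ ≤ ε / 2 := hle
      _ < ε := by linarith
  exact continuous_iff_le_induced.mp hcont

/-- A sequence converges in the mixed topology `γ = γ(‖·‖, τ)` if and only if it converges
in `τ` and is norm-bounded. -/
theorem mixedTopology_tendsto_iff
    {X : Type*} [NormedAddCommGroup X] [NormedSpace ℝ X] [CompleteSpace X]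
    (τ γ : TopologicalSpace X)
    (hcoarser : (UniformSpace.toTopologicalSpace : TopologicalSpace X) ≤ τ)
    (ht2 : @T2Space X τ) (haddgrp : @IsTopologicalAddGroup X τ _)
    (hsmul : @ContinuousSMul ℝ X _ _ τ) (hlc : @LocallyConvexSpace ℝ X _ _ _ _ τ)
    (hnorming : ∀ x : X,
      IsLUB {r : ℝ | ∃ f : wDualR X, @Continuous X ℝ τ _ ⇑f ∧ ‖f‖ ≤ 1 ∧ r = |f x|} ‖x‖)
    (hmix : IsMixedTopology X τ γ) (u : ℕ → X) (l : X) :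
    Filter.Tendsto u Filter.atTop (@nhds X γ l) ↔
      (Filter.Tendsto u Filter.atTop (@nhds X τ l) ∧ Bornology.IsBounded (Set.range u)) := by
  constructor
  · intro hγ
    have hτconv : Filter.Tendsto u Filter.atTop (@nhds X τ l) :=
      hγ.mono_right (nhds_mono hmix.le_tau)
    refine ⟨hτconv, ?_⟩
    by_contra hub
    rw [isBounded_iff_forall_norm_le] at hub
    push_neg at hub
    have key : ∀ k : ℕ, ∃ m, k ≤ m ∧ ((k : ℝ) + 2 + ‖l‖) < ‖u m‖ := by
      intro k
      obtain ⟨x, ⟨m, rfl⟩, hx⟩ := hub ((k : ℝ) + 2 + ‖l‖ + ∑ j ∈ Finset.range k, ‖u j‖)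
      have hsum0 : (0:ℝ) ≤ ∑ j ∈ Finset.range k, ‖u j‖ :=
        Finset.sum_nonneg fun j _ => norm_nonneg _
      refine ⟨m, ?_, by linarith⟩
      by_contra hm
      push_neg at hm
      have h1 : ‖u m‖ ≤ ∑ j ∈ Finset.range k, ‖u j‖ :=
        Finset.single_le_sum (fun j _ => norm_nonneg _) (Finset.mem_range.2 hm)
      have hk0 : (0:ℝ) ≤ (k:ℝ) + 2 + ‖l‖ := by positivity
      linarith
    choose n hn hbig using key
    have hxk : ∀ k : ℕ, (k:ℝ) + 2 ≤ ‖u (n k) - l‖ := by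
      intro k
      have h1 := norm_sub_norm_le (u (n k)) l
      have h2 := hbig k
      linarith
    have hf : ∀ k : ℕ, ∃ f : wDualR X, @Continuous X ℝ τ _ ⇑f ∧ ‖f‖ ≤ 1 ∧
        ((k:ℝ)+1) < |f (u (n k) - l)| := by
      intro k
      have hlt : ((k:ℝ)+1) < ‖u (n k) - l‖ := lt_of_lt_of_le (by linarith) (hxk k)
      obtain ⟨r, hr, hlt2, _⟩ := (hnorming (u (n k) - l)).exists_between hlt
      obtain ⟨f, hfc, hf1, rfl⟩ := hr
      exact ⟨f, hfc, hf1, hlt2⟩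
    choose f hfc hf1 hfbig using hf
    set a : ℕ → ℝ := fun k => |f k (u (n k) - l)|⁻¹ with ha
    have hapos : ∀ k, 0 < |f k (u (n k) - l)| := fun k =>
      lt_of_le_of_lt (by positivity) (hfbig k)
    have ha0 : ∀ k, 0 ≤ a k := fun k => inv_nonneg.2 (hapos k).le
    have hale : ∀ k, a k ≤ ((k:ℝ)+1)⁻¹ := by
      intro k
      exact inv_anti₀ (by positivity) (hfbig k).le
    have ha1 : ∀ k, a k ≤ 1 := by
      intro k
      refine (hale k).trans ?_
      rw [inv_le_one_iff₀]
      right; linarith [Nat.cast_nonneg (α := ℝ) k]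
    have habs : ∀ (x : X) (k : ℕ), |f k x| ≤ ‖x‖ := by
      intro x k
      calc |f k x| = ‖f k x‖ := (Real.norm_eq_abs _).symm
        _ ≤ ‖f k‖ * ‖x‖ := (f k).le_opNorm x
        _ ≤ 1 * ‖x‖ := mul_le_mul_of_nonneg_right (hf1 k) (norm_nonneg x)
        _ = ‖x‖ := one_mul _
    have hcoord : ∀ x : X, ∀ k, ‖a k * f k x‖ ≤ ‖x‖ := by
      intro x k
      rw [Real.norm_eq_abs, abs_mul, abs_of_nonneg (ha0 k)]
      calc a k * |f k x| ≤ 1 * ‖x‖ :=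
            mul_le_mul (ha1 k) (habs x k) (abs_nonneg _) zero_le_one
        _ = ‖x‖ := one_mul _
    let T : X →ₗ[ℝ] BoundedContinuousFunction ℕ ℝ :=
      { toFun := fun x => BoundedContinuousFunction.ofNormedAddCommGroup
          (fun k => a k * f k x) continuous_of_discreteTopology ‖x‖ (hcoord x)
        map_add' := by
          intro x y
          ext k
          simp [BoundedContinuousFunction.coe_ofNormedAddCommGroup, mul_add]
        map_smul' := by
          intro c x
          ext k
          simp [BoundedContinuousFunction.coe_ofNormedAddCommGroup]
          ring }
    have hTapp : ∀ (x : X) (k : ℕ), T x k = a k * f k x := fun x k => rfl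
    have hTnorm : ∀ x : X, ‖T x‖ ≤ ‖x‖ := fun x =>
      BoundedContinuousFunction.norm_ofNormedAddCommGroup_le
        continuous_of_discreteTopology (norm_nonneg x) (hcoord x)
    set t₂ : TopologicalSpace X := TopologicalSpace.induced (⇑T) inferInstance with ht₂
    set γ' : TopologicalSpace X := τ ⊓ t₂ with hγ'def
    have hγle : γ ≤ γ' := by
      refine hmix.finest γ' ?_ ?_ ?_ ?_ ?_
      · exact topologicalAddGroup_inf haddgrp (topologicalAddGroup_induced T)
      · have h2 : @ContinuousSMul ℝ X _ _ t₂ := continuousSMul_induced T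
        exact @continuousSMul_inf ℝ X _ _ τ t₂ hsmul h2
      · refine le_inf hcoarser ?_
        exact (@continuous_iff_le_induced X (BoundedContinuousFunction ℕ ℝ) (⇑T)
          UniformSpace.toTopologicalSpace _).mp (mixedAux_T_cont T hTnorm)
      · exact inf_le_left
      · intro B hB
        exact mixedAux_agree τ haddgrp a f hfc ha0 hale habs T hTapp B hB
    have hconv' : Filter.Tendsto u Filter.atTop (@nhds X γ' l) :=
      hγ.mono_right (nhds_mono hγle)
    have hTc : @Continuous X (BoundedContinuousFunction ℕ ℝ) γ' _ ⇑T :=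
      (@continuous_iff_le_induced X (BoundedContinuousFunction ℕ ℝ) (⇑T) γ' _).mpr
        inf_le_right
    have hTt : Filter.Tendsto (fun m => T (u m)) Filter.atTop (nhds (T l)) :=
      (hTc.tendsto l).comp hconv'
    obtain ⟨N, hN⟩ := Metric.tendsto_atTop.1 hTt 1 one_pos
    have h1 := hN (n N) (hn N)
    have h2 : (1:ℝ) ≤ ‖T (u (n N)) - T l‖ := by
      rw [← map_sub]
      have h3 := BoundedContinuousFunction.norm_coe_le_norm (T (u (n N) - l)) N
      rw [hTapp] at h3
      have heq : ‖a N * f N (u (n N) - l)‖ = 1 := by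
        rw [Real.norm_eq_abs, abs_mul, abs_of_nonneg (ha0 N)]
        exact inv_mul_cancel₀ (hapos N).ne'
      linarith
    rw [dist_eq_norm] at h1
    linarith
  · rintro ⟨hτc, hb⟩
    have hBb : Bornology.IsBounded (insert l (Set.range u)) := hb.insert l
    have hag := hmix.agrees (insert l (Set.range u)) hBb
    have hlB : l ∈ insert l (Set.range u) := Set.mem_insert _ _
    have hunB : ∀ m, u m ∈ insert l (Set.range u) := fun m =>
      Set.mem_insert_of_mem _ ⟨m, rfl⟩
    let v : ℕ → (insert l (Set.range u) : Set X) := fun m => ⟨u m, hunB m⟩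
    have h1 : Filter.Tendsto v Filter.atTop
        (@nhds _ (TopologicalSpace.induced ((↑) : (insert l (Set.range u) : Set X) → X) τ)
          ⟨l, hlB⟩) := by
      rw [@nhds_induced X _ τ ((↑) : (insert l (Set.range u) : Set X) → X) ⟨l, hlB⟩,
        Filter.tendsto_comap_iff]
      exact hτc
    rw [← hag] at h1
    have hc : @Continuous (insert l (Set.range u) : Set X) X
        (TopologicalSpace.induced ((↑) : (insert l (Set.range u) : Set X) → X) γ) γ
        ((↑) : (insert l (Set.range u) : Set X) → X) :=
      @continuous_induced_dom _ _ ((↑) : (insert l (Set.range u) : Set X) → X) γ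
    exact (hc.tendsto ⟨l, hlB⟩).comp h1

end
end

section
/- Let X be a Banach space and τ a coarser Hausdorff locally convex topology with (X,τ)' norming. Then τ is sequentially complete on norm-bounded sets (every norm-bounded τ-Cauchy sequence τ-converges) if and only if (X, γ(‖·‖,τ)) is sequentially complete. -/
noncomputable section

open Filter Topology

/-- Transfer of convergence along equal induced topologies on a set containing the sequence. -/
lemma tendsto_of_induced_eq' {X : Type*} {t1 t2 : TopologicalSpace X} {B : Set X}
    (h : TopologicalSpace.induced ((↑) : B → X) t1 = TopologicalSpace.induced ((↑) : B → X) t2)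
    {u : ℕ → X} {l : X} (hu : ∀ n, u n ∈ B) (hl : l ∈ B)
    (hconv : Filter.Tendsto u Filter.atTop (@nhds X t2 l)) :
    Filter.Tendsto u Filter.atTop (@nhds X t1 l) := by
  set v : ℕ → B := fun n => ⟨u n, hu n⟩ with hv
  have h2 : Filter.Tendsto v Filter.atTop
      (@nhds B (TopologicalSpace.induced ((↑) : B → X) t2) ⟨l, hl⟩) := by
    rw [@nhds_induced]
    exact Filter.tendsto_comap_iff.mpr hconv
  rw [← h, @nhds_induced] at h2
  have h3 := Filter.tendsto_comap_iff.mp h2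
  exact h3

/-- Transfer of Cauchyness along equal induced topologies. -/
lemma seqCauchyIn_of_induced_eq' {X : Type*} [AddCommGroup X] {t1 t2 : TopologicalSpace X}
    {B : Set X}
    (h : TopologicalSpace.induced ((↑) : B → X) t1 = TopologicalSpace.induced ((↑) : B → X) t2)
    (h0 : (0 : X) ∈ B) {u : ℕ → X} (hd : ∀ m n, u m - u n ∈ B)
    (hu : SeqCauchyIn t2 u) : SeqCauchyIn t1 u := by
  intro U hU
  obtain ⟨O, hOU, hO, h0O⟩ := (@mem_nhds_iff X t1 0 U).mp hU
  have hopen : IsOpen[TopologicalSpace.induced ((↑) : B → X) t1] (((↑) : B → X) ⁻¹' O) :=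
    ⟨O, hO, rfl⟩
  rw [h] at hopen
  obtain ⟨W, hW, hWO⟩ := hopen
  have h0W : (0 : X) ∈ W := by
    have : (⟨0, h0⟩ : B) ∈ ((↑) : B → X) ⁻¹' W := by
      rw [hWO]; exact h0O
    exact this
  obtain ⟨N, hN⟩ := hu W (hW.mem_nhds h0W)
  refine ⟨N, fun m hm n hn => hOU ?_⟩
  have : (⟨u m - u n, hd m n⟩ : B) ∈ ((↑) : B → X) ⁻¹' W := hN m hm n hn
  rw [hWO] at this
  exact this

/-- On a norm-bounded set, the topology induced by the auxiliary map `T` (built from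
norm-bounded `τ`-continuous functionals with coefficients tending to zero) is coarser than
`τ`. -/
lemma induced_le_on_bounded {X : Type*} [NormedAddCommGroup X] [NormedSpace ℝ X]
    (f : ℕ → wDualR X) (hf1 : ∀ k, ‖f k‖ ≤ 1)
    (a : ℕ → ℝ) (ha0 : ∀ k, 0 ≤ a k) (ha1 : ∀ k, a k ≤ 1)
    (hat : Tendsto a atTop (nhds 0))
    (T : X →ₗ[ℝ] BoundedContinuousFunction ℕ ℝ)
    (hT : ∀ x k, T x k = a k * f k x)
    (τ : TopologicalSpace X) (hfc : ∀ k, @Continuous X ℝ τ _ ⇑(f k))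
    (B : Set X) (hB : Bornology.IsBounded B) :
    TopologicalSpace.induced ((↑) : B → X) τ ≤
      TopologicalSpace.induced ((↑) : B → X)
        (TopologicalSpace.induced ⇑T inferInstance) := by
  rw [induced_compose]
  letI tB : TopologicalSpace B := TopologicalSpace.induced ((↑) : B → X) τ
  change tB ≤ _
  rw [← continuous_iff_le_induced]
  rw [continuous_iff_continuousAt]
  intro x₀
  refine Metric.tendsto_nhds.mpr fun ε hε => ?_
  obtain ⟨r, hr⟩ := Bornology.IsBounded.exists_norm_le hB
  have hr0 : 0 ≤ r := le_trans (norm_nonneg _) (hr _ x₀.2)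
  set δ : ℝ := ε / 2 / (2 * r + 1) with hδdef
  have hδ : 0 < δ := by positivity
  obtain ⟨K, hK⟩ := (Metric.tendsto_nhds.mp hat δ hδ).exists_forall_of_atTop
  set V : Set X := ⋂ k ∈ Finset.range K, (⇑(f k)) ⁻¹' Metric.ball (f k ↑x₀) (ε / 2) with hVdef
  have hV : V ∈ @nhds X τ (↑x₀) := by
    refine Filter.biInter_finset_mem _ |>.mpr fun k _ => ?_
    exact ((hfc k).continuousAt).preimage_mem_nhds (Metric.ball_mem_nhds _ (by positivity))
  have hVmem : ((↑) : B → X) ⁻¹' V ∈ @nhds B tB x₀ := by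
    rw [@nhds_induced]
    exact Filter.preimage_mem_comap hV
  filter_upwards [hVmem] with y hy
  rw [dist_eq_norm]
  show ‖T (y : X) - T (x₀ : X)‖ < ε
  rw [← map_sub]
  have hnorm : ‖T ((y : X) - (x₀ : X))‖ ≤ ε / 2 := by
    refine (BoundedContinuousFunction.norm_le (by positivity)).mpr fun k => ?_
    rw [hT, Real.norm_eq_abs, abs_mul, abs_of_nonneg (ha0 k)]
    rcases lt_or_ge k K with hk | hk
    · have hmem : (y : X) ∈ (⇑(f k)) ⁻¹' Metric.ball (f k ↑x₀) (ε / 2) := by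
        have := Set.mem_iInter₂.mp hy k (Finset.mem_range.mpr hk)
        exact this
      have hlt : |f k (y : X) - f k (x₀ : X)| < ε / 2 := by
        simpa [Metric.mem_ball, dist_eq_norm, Real.norm_eq_abs] using hmem
      have hlt' : |f k ((y : X) - (x₀ : X))| < ε / 2 := by rwa [map_sub]
      calc a k * |f k ((y : X) - (x₀ : X))| ≤ 1 * |f k ((y : X) - (x₀ : X))| :=
            mul_le_mul_of_nonneg_right (ha1 k) (abs_nonneg _)
        _ ≤ ε / 2 := by rw [one_mul]; exact hlt'.le
    · have hak : a k ≤ δ := by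
        have h1 := hK k hk
        have h2 : |a k| < δ := by simpa [Real.dist_eq] using h1
        exact (le_abs_self _).trans h2.le
      have hfb : |f k ((y : X) - (x₀ : X))| ≤ 2 * r + 1 := by
        calc |f k ((y : X) - (x₀ : X))| ≤ ‖f k‖ * ‖(y : X) - (x₀ : X)‖ :=
              (f k).le_opNorm _
          _ ≤ 1 * (‖(y : X)‖ + ‖(x₀ : X)‖) :=
              mul_le_mul (hf1 k) (norm_sub_le _ _) (norm_nonneg _) zero_le_one
          _ ≤ 2 * r + 1 := by
              have h1 := hr _ y.2
              have h2 := hr _ x₀.2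
              linarith
      calc a k * |f k ((y : X) - (x₀ : X))| ≤ δ * (2 * r + 1) :=
            mul_le_mul hak hfb (abs_nonneg _) hδ.le
        _ = ε / 2 := by
            have h21 : (2 * r + 1) ≠ 0 := by positivity
            rw [hδdef]
            field_simp
  linarith

/-- A `γ`-Cauchy sequence is norm-bounded. -/
lemma bounded_of_seqCauchy {X : Type*} [NormedAddCommGroup X] [NormedSpace ℝ X]
    (τ γ : TopologicalSpace X)
    (hcoarser : (UniformSpace.toTopologicalSpace : TopologicalSpace X) ≤ τ)
    (haddgrp : @IsTopologicalAddGroup X τ _) (hsmul : @ContinuousSMul ℝ X _ _ τ)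
    (hnorming : ∀ x : X,
      IsLUB {r : ℝ | ∃ f : wDualR X, @Continuous X ℝ τ _ ⇑f ∧ ‖f‖ ≤ 1 ∧ r = |f x|} ‖x‖)
    (hmix : IsMixedTopology X τ γ)
    (u : ℕ → X) (hu : SeqCauchyIn γ u) :
    ∃ C, ∀ n, ‖u n‖ ≤ C := by
  by_contra hC
  push_neg at hC
  choose φ hφ using fun k : ℕ => hC ((4 : ℝ) ^ k)
  have hpos : ∀ k, 0 < ‖u (φ k)‖ := fun k => lt_trans (by positivity) (hφ k)
  have hex : ∀ k, ∃ g : wDualR X, @Continuous X ℝ τ _ ⇑g ∧ ‖g‖ ≤ 1 ∧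
      ‖u (φ k)‖ / 2 < |g (u (φ k))| := by
    intro k
    obtain ⟨rr, hrrS, hlt, -⟩ := (hnorming (u (φ k))).exists_between
      (show ‖u (φ k)‖ / 2 < ‖u (φ k)‖ by linarith [hpos k])
    obtain ⟨g, hg1, hg2, hval⟩ := hrrS
    exact ⟨g, hg1, hg2, by rw [← hval]; exact hlt⟩
  choose g hgc hg1 hglt using hex
  set a : ℕ → ℝ := fun k => 2 ^ k / ‖u (φ k)‖ with ha
  have ha0 : ∀ k, 0 ≤ a k := fun k => by positivity
  have hahalf : ∀ k, a k ≤ (1 / 2 : ℝ) ^ k := by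
    intro k
    rw [ha]
    rw [div_le_iff₀ (hpos k)]
    have hmulpow : ((1 : ℝ) / 2) ^ k * (4 : ℝ) ^ k = 2 ^ k := by
      rw [← mul_pow]; norm_num
    nlinarith [hφ k, pow_pos (show (0:ℝ) < 1/2 by norm_num) k]
  have ha1 : ∀ k, a k ≤ 1 := fun k =>
    (hahalf k).trans (pow_le_one₀ (by norm_num) (by norm_num))
  have hat : Tendsto a atTop (nhds 0) := by
    refine squeeze_zero ha0 hahalf ?_
    exact tendsto_pow_atTop_nhds_zero_of_lt_one (by norm_num) (by norm_num)
  have hbT : ∀ x : X, ∀ k, ‖a k * g k x‖ ≤ ‖x‖ := by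
    intro x k
    rw [Real.norm_eq_abs, abs_mul, abs_of_nonneg (ha0 k)]
    have h1 : |g k x| ≤ ‖x‖ := by
      have h2 := (g k).le_opNorm x
      have h3 : ‖g k‖ * ‖x‖ ≤ 1 * ‖x‖ :=
        mul_le_mul_of_nonneg_right (hg1 k) (norm_nonneg x)
      rw [one_mul] at h3
      exact le_trans h2 h3
    calc a k * |g k x| ≤ 1 * ‖x‖ := mul_le_mul (ha1 k) h1 (abs_nonneg _) zero_le_one
      _ = ‖x‖ := one_mul _
  let T : X →ₗ[ℝ] BoundedContinuousFunction ℕ ℝ :=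
    { toFun := fun x => BoundedContinuousFunction.ofNormedAddCommGroup
        (fun k => a k * g k x) continuous_of_discreteTopology ‖x‖ (hbT x)
      map_add' := fun x y => by
        ext k
        show a k * g k (x + y) = a k * g k x + a k * g k y
        rw [map_add]; ring
      map_smul' := fun c x => by
        ext k
        show a k * g k (c • x) = c * (a k * g k x)
        rw [map_smul]
        show a k * (c * g k x) = c * (a k * g k x)
        ring }
  have hT : ∀ x k, T x k = a k * g k x := fun x k => rfl
  have hTnorm : ∀ x : X, ‖T x‖ ≤ ‖x‖ := fun x =>
    (BoundedContinuousFunction.norm_le (norm_nonneg x)).mpr (hbT x)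
  set tp : TopologicalSpace X := TopologicalSpace.induced ⇑T inferInstance with htp
  set γ' : TopologicalSpace X := τ ⊓ tp with hγ'
  have hga : @IsTopologicalAddGroup X γ' _ :=
    topologicalAddGroup_inf haddgrp (topologicalAddGroup_induced T)
  have hgs : @ContinuousSMul ℝ X _ _ γ' :=
    @continuousSMul_inf ℝ X _ _ τ tp hsmul (continuousSMul_induced T)
  have hle1 : (UniformSpace.toTopologicalSpace : TopologicalSpace X) ≤ γ' := by
    refine le_inf hcoarser ?_
    rw [htp, ← continuous_iff_le_induced]
    exact AddMonoidHomClass.continuous_of_bound T 1 (fun x => by rw [one_mul]; exact hTnorm x)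
  have hle2 : γ' ≤ τ := inf_le_left
  have hagrees : ∀ B : Set X, Bornology.IsBounded B →
      TopologicalSpace.induced ((↑) : B → X) γ' = TopologicalSpace.induced ((↑) : B → X) τ := by
    intro B hB
    rw [hγ', induced_inf]
    exact inf_eq_left.mpr (induced_le_on_bounded g hg1 a ha0 ha1 hat T hT τ hgc B hB)
  have hγle : γ ≤ γ' := hmix.finest γ' hga hgs hle1 hle2 hagrees
  set V₀ : Set X := ⇑T ⁻¹' Metric.ball 0 1 with hV₀def
  have hV₀ : V₀ ∈ @nhds X γ 0 := by
    have h1 : V₀ ∈ @nhds X tp 0 := by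
      rw [htp, @nhds_induced]
      have : Metric.ball (0 : BoundedContinuousFunction ℕ ℝ) 1 ∈ nhds (T 0) := by
        rw [map_zero]
        exact Metric.ball_mem_nhds _ one_pos
      exact Filter.preimage_mem_comap this
    have h2 : @nhds X γ' 0 ≤ @nhds X tp 0 := nhds_mono inf_le_right
    exact nhds_mono hγle (h2 h1)
  obtain ⟨N, hN⟩ := hu V₀ hV₀
  have hTd : ∀ n, n ≥ N → ‖T (u n) - T (u N)‖ < 1 := by
    intro n hn
    have h1 : u n - u N ∈ V₀ := hN n hn N le_rfl
    rw [hV₀def] at h1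
    have h2 : T (u n - u N) ∈ Metric.ball (0 : BoundedContinuousFunction ℕ ℝ) 1 := h1
    rw [map_sub] at h2
    rwa [mem_ball_zero_iff] at h2
  set M : ℝ := (Finset.range (N + 1)).sup' ⟨0, Finset.mem_range.mpr (Nat.succ_pos N)⟩
    (fun n => ‖T (u n)‖) with hM'
  have hM : ∀ n, ‖T (u n)‖ ≤ M + 1 := by
    intro n
    rcases le_or_gt n N with h | h
    · have h1 : ‖T (u n)‖ ≤ M :=
        Finset.le_sup' (fun n => ‖T (u n)‖) (Finset.mem_range.mpr (Nat.lt_succ_of_le h))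
      linarith
    · have h1 := hTd n h.le
      have h2 : ‖T (u N)‖ ≤ M :=
        Finset.le_sup' (fun n => ‖T (u n)‖) (Finset.mem_range.mpr (Nat.lt_succ_of_le le_rfl))
      calc ‖T (u n)‖ = ‖T (u n) - T (u N) + T (u N)‖ := by rw [sub_add_cancel]
        _ ≤ ‖T (u n) - T (u N)‖ + ‖T (u N)‖ := norm_add_le _ _
        _ ≤ M + 1 := by linarith
  have hlow : ∀ k, (2 : ℝ) ^ k / 2 ≤ ‖T (u (φ k))‖ := by
    intro k
    have h1 : a k * |g k (u (φ k))| ≤ ‖T (u (φ k))‖ := by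
      have h2 := BoundedContinuousFunction.norm_coe_le_norm (T (u (φ k))) k
      rwa [hT, Real.norm_eq_abs, abs_mul, abs_of_nonneg (ha0 k)] at h2
    have h2 : (2 : ℝ) ^ k / 2 < a k * |g k (u (φ k))| := by
      have hh := hglt k
      have hmul := mul_lt_mul_of_pos_left hh
        (show (0:ℝ) < (2:ℝ) ^ k / ‖u (φ k)‖ from div_pos (by positivity) (hpos k))
      have hne : ‖u (φ k)‖ ≠ 0 := (hpos k).ne'
      have heq : (2 : ℝ) ^ k / ‖u (φ k)‖ * (‖u (φ k)‖ / 2) = 2 ^ k / 2 := by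
        field_simp
      rw [heq] at hmul
      exact hmul
    linarith
  obtain ⟨k, hk⟩ := pow_unbounded_of_one_lt (2 * (M + 1) + 2) (show (1:ℝ) < 2 by norm_num)
  have h1 := hlow k
  have h2 := hM (φ k)
  linarith

/-- `τ` is sequentially complete on norm-bounded sets iff `(X, γ(‖·‖,τ))` is sequentially
complete. -/
theorem mixedTopology_seqComplete_iff
    {X : Type*} [NormedAddCommGroup X] [NormedSpace ℝ X] [CompleteSpace X]
    (τ γ : TopologicalSpace X)
    (hcoarser : (UniformSpace.toTopologicalSpace : TopologicalSpace X) ≤ τ)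
    (ht2 : @T2Space X τ) (haddgrp : @IsTopologicalAddGroup X τ _)
    (hsmul : @ContinuousSMul ℝ X _ _ τ) (hlc : @LocallyConvexSpace ℝ X _ _ _ _ τ)
    (hnorming : ∀ x : X,
      IsLUB {r : ℝ | ∃ f : wDualR X, @Continuous X ℝ τ _ ⇑f ∧ ‖f‖ ≤ 1 ∧ r = |f x|} ‖x‖)
    (hmix : IsMixedTopology X τ γ) :
    (∀ u : ℕ → X, (∃ C, ∀ n, ‖u n‖ ≤ C) → SeqCauchyIn τ u →
        ∃ l : X, Filter.Tendsto u Filter.atTop (@nhds X τ l)) ↔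
      (∀ u : ℕ → X, SeqCauchyIn γ u →
        ∃ l : X, Filter.Tendsto u Filter.atTop (@nhds X γ l)) := by
  constructor
  · intro hτ u hu
    obtain ⟨C, hC⟩ := bounded_of_seqCauchy τ γ hcoarser haddgrp hsmul hnorming hmix u hu
    have huτ : SeqCauchyIn τ u := fun U hU => hu U (nhds_mono hmix.le_tau hU)
    obtain ⟨l, hl⟩ := hτ u ⟨C, hC⟩ huτ
    set R : ℝ := max C ‖l‖ with hR
    set B : Set X := Metric.closedBall (0 : X) R with hB
    have hBb : Bornology.IsBounded B := Metric.isBounded_closedBall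
    have hmemu : ∀ n, u n ∈ B := fun n => by
      rw [hB, Metric.mem_closedBall, dist_zero_right]
      exact le_trans (hC n) (le_max_left _ _)
    have hmeml : l ∈ B := by
      rw [hB, Metric.mem_closedBall, dist_zero_right]
      exact le_max_right _ _
    exact ⟨l, tendsto_of_induced_eq' (hmix.agrees B hBb) hmemu hmeml hl⟩
  · intro hγ u hb huτ
    obtain ⟨C, hC⟩ := hb
    have hC0 : 0 ≤ C := le_trans (norm_nonneg _) (hC 0)
    set B : Set X := Metric.closedBall (0 : X) (2 * C) with hB
    have hBb : Bornology.IsBounded B := Metric.isBounded_closedBall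
    have h0B : (0 : X) ∈ B := by
      rw [hB, Metric.mem_closedBall, dist_self]
      linarith
    have hd : ∀ m n, u m - u n ∈ B := fun m n => by
      rw [hB, Metric.mem_closedBall, dist_zero_right]
      calc ‖u m - u n‖ ≤ ‖u m‖ + ‖u n‖ := norm_sub_le _ _
        _ ≤ 2 * C := by linarith [hC m, hC n]
    have huγ : SeqCauchyIn γ u := seqCauchyIn_of_induced_eq' (hmix.agrees B hBb) h0B hd huτ
    obtain ⟨l, hl⟩ := hγ u huγ
    exact ⟨l, hl.mono_right (nhds_mono hmix.le_tau)⟩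

end
end

section
/- Let X be a Banach space and τ a coarser Hausdorff locally convex topology, with γ = γ(‖·‖,τ) the mixed topology. Then the dual (X,γ)' equals the norm-closure in X' of the dual (X,τ)'; in particular (X,γ)' is a norm-closed linear subspace of X' and hence a Banach space. -/
noncomputable section

open Filter Topology

namespace MixedAux

open Pointwise

/-- Hahn-Banach decomposition: a linear functional dominated by a sum of two sublinear
functionals splits as a sum of linear functionals dominated by each. -/
lemma sublinear_decomp {E : Type*} [AddCommGroup E] [Module ℝ E] (f : E →ₗ[ℝ] ℝ)
    (p q : E → ℝ)
    (hp_hom : ∀ c : ℝ, 0 < c → ∀ x, p (c • x) = c * p x)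
    (hp_add : ∀ x y, p (x + y) ≤ p x + p y)
    (hq_hom : ∀ c : ℝ, 0 < c → ∀ x, q (c • x) = c * q x)
    (hq_add : ∀ x y, q (x + y) ≤ q x + q y)
    (hf : ∀ x, f x ≤ p x + q x) :
    ∃ g h : E →ₗ[ℝ] ℝ, (∀ x, g x + h x = f x) ∧ (∀ x, g x ≤ p x) ∧ ∀ x, h x ≤ q x := by
  classical
  set D : Submodule ℝ (E × E) := LinearMap.range ((LinearMap.id : E →ₗ[ℝ] E).prod LinearMap.id)
  set F : E × E →ₗ[ℝ] ℝ := f.comp (LinearMap.fst ℝ E E)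
  set N : E × E → ℝ := fun z => p z.1 + q z.2
  have hN_hom : ∀ c : ℝ, 0 < c → ∀ z : E × E, N (c • z) = c * N z := by
    intro c hc z
    simp only [N, Prod.smul_fst, Prod.smul_snd, hp_hom c hc, hq_hom c hc]
    ring
  have hN_add : ∀ z w : E × E, N (z + w) ≤ N z + N w := by
    intro z w
    have := hp_add z.1 w.1
    have := hq_add z.2 w.2
    simp only [N, Prod.fst_add, Prod.snd_add]
    linarith
  have hdom : ∀ z : (F.toPMap D).domain, (F.toPMap D) z ≤ N z := by
    rintro ⟨z, hz⟩
    obtain ⟨a, rfl⟩ := hz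
    have : F ((a, a) : E × E) = f a := rfl
    change F _ ≤ N _
    simpa [N, this] using hf a
  obtain ⟨G, hG_eq, hG_le⟩ := exists_extension_of_le_sublinear (F.toPMap D) N hN_hom hN_add hdom
  refine ⟨G.comp (LinearMap.inl ℝ E E), G.comp (LinearMap.inr ℝ E E), ?_, ?_, ?_⟩
  · intro x
    have hmem : ((x, x) : E × E) ∈ D := ⟨x, rfl⟩
    have h1 : G ((x, x) : E × E) = f x := by
      have := hG_eq ⟨((x, x) : E × E), hmem⟩
      erw [LinearMap.toPMap_apply] at this
      exact this
    have h2 : ((x, x) : E × E) = (x, 0) + (0, x) := by simp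
    simp only [LinearMap.comp_apply, LinearMap.inl_apply, LinearMap.inr_apply]
    rw [← h1, h2, map_add]
  · intro x
    have hq0 : q 0 = 0 := by
      have := hq_hom 2 (by norm_num) 0
      simp at this; linarith
    have := hG_le ((x, 0) : E × E)
    simpa [N, hq0] using this
  · intro x
    have hp0 : p 0 = 0 := by
      have := hp_hom 2 (by norm_num) 0
      simp at this; linarith
    have := hG_le ((0, x) : E × E)
    simpa [N, hp0] using this

/-- A linear functional bounded on a neighborhood of zero is continuous. -/
lemma cont_of_bounded_on_nhd {E : Type*} [AddCommGroup E] [Module ℝ E] [TopologicalSpace E]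
    [IsTopologicalAddGroup E] [ContinuousSMul ℝ E] (g : E →ₗ[ℝ] ℝ) {W : Set E}
    (hW : W ∈ 𝓝 (0 : E)) {C : ℝ} (hC : 0 ≤ C) (hg : ∀ x ∈ W, |g x| ≤ C) :
    Continuous g := by
  apply continuous_of_continuousAt_zero g
  rw [ContinuousAt, map_zero, Metric.tendsto_nhds]
  intro δ hδ
  set c : ℝ := δ / (C + 1) with hc
  have hc0 : 0 < c := div_pos hδ (by linarith)
  have hcW : c • W ∈ 𝓝 (0 : E) := by
    rwa [set_smul_mem_nhds_zero_iff hc0.ne']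
  filter_upwards [hcW] with x hx
  obtain ⟨w, hw, rfl⟩ := hx
  have : |g (c • w)| ≤ c * C := by
    rw [map_smul, smul_eq_mul, abs_mul, abs_of_pos hc0]
    exact mul_le_mul_of_nonneg_left (hg w hw) hc0.le
  have hlt : c * C < δ := by
    rw [hc, div_mul_eq_mul_div, div_lt_iff₀ (by linarith : (0:ℝ) < C + 1)]
    nlinarith
  rw [Real.dist_eq, sub_zero]
  exact lt_of_le_of_lt this hlt

variable {X : Type*} [NormedAddCommGroup X] [NormedSpace ℝ X]

lemma wDualR_cont (f : wDualR X) :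
    @Continuous X ℝ (UniformSpace.toTopologicalSpace) _ ⇑f := f.cont

/-- Build an element of the dual from a linear functional continuous for the norm topology. -/
def mkDual (g : X →ₗ[ℝ] ℝ)
    (hg : @Continuous X ℝ (UniformSpace.toTopologicalSpace) _ ⇑g) : wDualR X := ⟨g, hg⟩

@[simp] lemma mkDual_coe (g : X →ₗ[ℝ] ℝ) (hg) : ⇑(mkDual g hg) = ⇑g := rfl

lemma dist_apply_le (f g : wDualR X) (x : X) : dist (f x) (g x) ≤ dist f g * ‖x‖ := by
  rw [dist_eq_norm, dist_eq_norm]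
  simpa using (f - g).le_opNorm x

lemma dist_le_of_forall (f g : wDualR X) {C : ℝ} (hC : 0 ≤ C)
    (h : ∀ x, |f x - g x| ≤ C * ‖x‖) : dist f g ≤ C := by
  rw [dist_eq_norm]
  refine ContinuousLinearMap.opNorm_le_bound _ hC fun x => ?_
  simpa [Real.norm_eq_abs] using h x

lemma absorbent_of_norm_nhd {W : Set X}
    (h : W ∈ @nhds X UniformSpace.toTopologicalSpace 0) : Absorbent ℝ W :=
  absorbent_nhds_zero h

/-- restriction of a continuous map to a subset, with induced topology -/
lemma cont_restrict (γ : TopologicalSpace X) (B : Set X) (g : X → ℝ)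
    (hg : @Continuous X ℝ γ _ g) :
    @Continuous B ℝ (TopologicalSpace.induced ((↑) : B → X) γ) _ (fun x : B => g x) :=
  @Continuous.comp B X ℝ (TopologicalSpace.induced ((↑) : B → X) γ) γ _
    ((↑) : B → X) g hg continuous_induced_dom

/-- A norm-continuous linear functional which is `γ`-continuous on every bounded set is
`γ`-continuous, by maximality of the mixed topology. -/
lemma cont_of_cont_on_bounded (τ γ : TopologicalSpace X) (hmix : IsMixedTopology X τ γ)
    (f : wDualR X)
    (h : ∀ B : Set X, Bornology.IsBounded B →
      @Continuous B ℝ (TopologicalSpace.induced ((↑) : B → X) γ) _ (fun x : B => f x)) :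
    @Continuous X ℝ γ _ ⇑f := by
  have h_add : @IsTopologicalAddGroup X (TopologicalSpace.induced (⇑f) inferInstance) _ := by
    exact topologicalAddGroup_induced (f : X →+ ℝ)
  have h_smul : @ContinuousSMul ℝ X _ _ (TopologicalSpace.induced (⇑f) inferInstance) :=
    continuousSMul_induced (f : X →ₗ[ℝ] ℝ)
  have h_add' : @IsTopologicalAddGroup X (γ ⊓ (TopologicalSpace.induced (⇑f) inferInstance)) _ :=
    topologicalAddGroup_inf hmix.addGroup h_add
  have h_smul' : @ContinuousSMul ℝ X _ _ (γ ⊓ (TopologicalSpace.induced (⇑f) inferInstance)) :=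
    @continuousSMul_inf ℝ X _ _ γ (TopologicalSpace.induced (⇑f) inferInstance)
      hmix.contSMul h_smul
  have h_norm : (UniformSpace.toTopologicalSpace : TopologicalSpace X) ≤
      γ ⊓ (TopologicalSpace.induced (⇑f) inferInstance) :=
    le_inf hmix.norm_le (continuous_iff_le_induced.mp (wDualR_cont f))
  have h_le : γ ⊓ (TopologicalSpace.induced (⇑f) inferInstance) ≤ τ :=
    le_trans inf_le_left hmix.le_tau
  have h_agrees : ∀ B : Set X, Bornology.IsBounded B →
      TopologicalSpace.induced ((↑) : B → X)
          (γ ⊓ (TopologicalSpace.induced (⇑f) inferInstance)) =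
        TopologicalSpace.induced ((↑) : B → X) τ := by
    intro B hB
    rw [induced_inf, hmix.agrees B hB, induced_compose]
    refine inf_eq_left.mpr ?_
    have hc := h B hB
    rw [hmix.agrees B hB] at hc
    exact continuous_iff_le_induced.mp hc
  have := hmix.finest (γ ⊓ (TopologicalSpace.induced (⇑f) inferInstance))
    h_add' h_smul' h_norm h_le h_agrees
  exact continuous_iff_le_induced.mpr (le_trans this inf_le_right)

/-- The `γ`-dual is norm closed. -/
lemma gammaDual_isClosed (τ γ : TopologicalSpace X) (hmix : IsMixedTopology X τ γ) :
    IsClosed {f : wDualR X | @Continuous X ℝ γ _ ⇑f} := by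
  refine isClosed_of_closure_subset ?_
  intro f hf
  refine cont_of_cont_on_bounded τ γ hmix f ?_
  intro B hB
  have hseq : ∀ n : ℕ, ∃ g : wDualR X,
      (@Continuous X ℝ γ _ ⇑g) ∧ dist f g < 1 / (n + 1) := by
    intro n
    obtain ⟨g, hg1, hg2⟩ := Metric.mem_closure_iff.mp hf (1 / (n + 1)) (by positivity)
    exact ⟨g, hg1, hg2⟩
  choose g hgc hgd using hseq
  obtain ⟨R₀, hR₀⟩ := isBounded_iff_forall_norm_le.mp hB
  have hR : ∀ x ∈ B, ‖x‖ ≤ max R₀ 0 := fun x hx => le_trans (hR₀ x hx) (le_max_left _ _)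
  have hunif : TendstoUniformly (fun n (x : B) => g n x) (fun x : B => f x) atTop := by
    rw [Metric.tendstoUniformly_iff]
    intro ε hε
    have hd0 : Tendsto (fun n => dist f (g n)) atTop (𝓝 0) :=
      squeeze_zero (fun n => dist_nonneg) (fun n => (hgd n).le)
        tendsto_one_div_add_atTop_nhds_zero_nat
    have htend : Tendsto (fun n : ℕ => dist f (g n) * max R₀ 0) atTop (𝓝 0) := by
      simpa using hd0.mul_const (max R₀ 0)
    filter_upwards [htend.eventually_lt_const hε] with n hn x
    calc dist (f (x : X)) (g n (x : X)) ≤ dist f (g n) * ‖(x : X)‖ := dist_apply_le _ _ _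
      _ ≤ dist f (g n) * max R₀ 0 :=
        mul_le_mul_of_nonneg_left (hR _ x.2) dist_nonneg
      _ < ε := hn
  letI : TopologicalSpace B := TopologicalSpace.induced ((↑) : B → X) γ
  exact hunif.continuous (Eventually.of_forall fun n => cont_restrict γ B (g n) (hgc n)).frequently

/-- The hard inclusion: every `γ`-continuous functional is a norm-limit of `τ`-continuous
functionals. -/
lemma gammaDual_subset_closure (τ γ : TopologicalSpace X)
    (hcoarser : (UniformSpace.toTopologicalSpace : TopologicalSpace X) ≤ τ)
    (haddgrp : @IsTopologicalAddGroup X τ _) (hsmul : @ContinuousSMul ℝ X _ _ τ)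
    (hlc : @LocallyConvexSpace ℝ X _ _ _ _ τ) (hmix : IsMixedTopology X τ γ) (f : wDualR X)
    (hf : @Continuous X ℝ γ _ ⇑f) :
    f ∈ closure {g : wDualR X | @Continuous X ℝ τ _ ⇑g} := by
  rw [Metric.mem_closure_iff]
  intro ε₀ hε₀
  set ε : ℝ := ε₀ / 2 with hεdef
  have hε : 0 < ε := by positivity
  set V : Set X := ⇑f ⁻¹' Metric.ball 0 ε with hVdef
  have hV : V ∈ @nhds X γ 0 := by
    have h0 : (⇑f) 0 = 0 := map_zero f
    have ht := hf.tendsto 0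
    rw [h0] at ht
    exact ht (Metric.ball_mem_nhds 0 hε)
  set B : Set X := Metric.closedBall 0 1 with hBdef
  have hBbd : Bornology.IsBounded B := Metric.isBounded_closedBall
  have h0B : (0 : X) ∈ B := Metric.mem_closedBall_self zero_le_one
  -- transfer the neighborhood through the agreement on the unit ball
  have h₁ : ((↑) : B → X) ⁻¹' V ∈
      @nhds B (TopologicalSpace.induced ((↑) : B → X) γ) ⟨0, h0B⟩ := by
    rw [@nhds_induced X B γ ((↑) : B → X) ⟨0, h0B⟩]
    exact Filter.preimage_mem_comap hV
  rw [hmix.agrees B hBbd, @nhds_induced X B τ ((↑) : B → X) ⟨0, h0B⟩] at h₁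
  obtain ⟨W', hW'n, hW'sub⟩ := Filter.mem_comap.mp h₁
  -- refine to an absolutely convex τ-neighborhood
  have hbasis := @nhds_hasBasis_absConvex ℝ X _ _ _ _ τ hlc hsmul
  obtain ⟨W, ⟨hWn, hWbal, hWconv⟩, hWsub⟩ := hbasis.mem_iff.mp hW'n
  have hWV : ∀ x ∈ W, x ∈ B → x ∈ V := fun x hxW hxB =>
    hW'sub (show ((⟨x, hxB⟩ : B) : X) ∈ W' from hWsub hxW)
  have hWnorm : W ∈ @nhds X UniformSpace.toTopologicalSpace 0 :=
    nhds_mono hcoarser hWn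
  have habs : Absorbent ℝ W := absorbent_of_norm_nhd hWnorm
  -- the key estimate
  have key : ∀ x : X, |f x| ≤ ε * gauge W x + ε * ‖x‖ := by
    intro x
    have h1 : ∀ r : ℝ, max (gauge W x) ‖x‖ < r → |f x| ≤ ε * r := by
      intro r hr
      have hr0 : 0 < r := lt_of_le_of_lt (le_max_of_le_right (norm_nonneg x)) hr
      have hgx : gauge W x < r := lt_of_le_of_lt (le_max_left _ _) hr
      obtain ⟨b, hb0, hbr, hxb⟩ := exists_lt_of_gauge_lt habs hgx
      obtain ⟨w, hw, hxw⟩ := hxb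
      have hmem : r⁻¹ • x ∈ W := by
        rw [← hxw, smul_smul]
        refine hWbal.smul_mem ?_ hw
        rw [Real.norm_eq_abs, abs_of_pos (mul_pos (inv_pos.2 hr0) hb0), inv_mul_eq_div]
        exact (div_le_one hr0).mpr hbr.le
      have hball : r⁻¹ • x ∈ B := by
        rw [hBdef, Metric.mem_closedBall, dist_zero_right, norm_smul, Real.norm_eq_abs,
          abs_of_pos (inv_pos.2 hr0), inv_mul_eq_div]
        exact (div_le_one hr0).mpr (le_trans (le_max_of_le_right le_rfl : ‖x‖ ≤ _) hr.le)
      have hfV := hWV _ hmem hball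
      rw [hVdef, Set.mem_preimage, Metric.mem_ball, dist_zero_right, map_smul, smul_eq_mul,
        Real.norm_eq_abs, abs_mul, abs_of_pos (inv_pos.2 hr0), inv_mul_eq_div,
        div_lt_iff₀ hr0] at hfV
      nlinarith [abs_nonneg (f x)]
    have h2 : |f x| ≤ ε * max (gauge W x) ‖x‖ := by
      refine le_of_forall_gt_imp_ge_of_dense fun a ha => ?_
      have hmax0 : 0 ≤ max (gauge W x) ‖x‖ := le_max_of_le_right (norm_nonneg x)
      have hra : max (gauge W x) ‖x‖ < a / ε := by
        rw [lt_div_iff₀ hε]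
        nlinarith
      have := h1 (a / ε) hra
      rwa [mul_div_cancel₀ _ hε.ne'] at this
    have h3 : max (gauge W x) ‖x‖ ≤ gauge W x + ‖x‖ :=
      max_le (le_add_of_nonneg_right (norm_nonneg x))
        (le_add_of_nonneg_left (gauge_nonneg x))
    nlinarith
  -- decompose f via Hahn-Banach
  have hsymm : ∀ y ∈ W, -y ∈ W := by
    intro y hy
    have := hWbal.smul_mem (a := (-1 : ℝ)) (by norm_num) hy
    simpa using this
  obtain ⟨g, h, hgh, hg, hh⟩ := sublinear_decomp (f : X →ₗ[ℝ] ℝ)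
    (fun x => ε * gauge W x) (fun x => ε * ‖x‖)
    (by
      intro c hc x
      show ε * gauge W (c • x) = c * (ε * gauge W x)
      rw [gauge_smul_of_nonneg hc.le, smul_eq_mul]; ring)
    (by
      intro x y
      show ε * gauge W (x + y) ≤ ε * gauge W x + ε * gauge W y
      have := gauge_add_le hWconv habs x y
      nlinarith)
    (by
      intro c hc x
      show ε * ‖c • x‖ = c * (ε * ‖x‖)
      rw [norm_smul, Real.norm_eq_abs, abs_of_pos hc]; ring)
    (by
      intro x y
      show ε * ‖x + y‖ ≤ ε * ‖x‖ + ε * ‖y‖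
      have := norm_add_le x y
      nlinarith)
    (fun x => le_trans (le_abs_self _) (key x))
  have hgabs : ∀ x, |g x| ≤ ε * gauge W x := by
    intro x
    rw [abs_le]
    refine ⟨?_, hg x⟩
    have := hg (-x)
    rw [map_neg, gauge_neg hsymm] at this
    linarith
  have hhabs : ∀ x, |h x| ≤ ε * ‖x‖ := by
    intro x
    rw [abs_le]
    refine ⟨?_, hh x⟩
    have := hh (-x)
    rw [map_neg, norm_neg] at this
    linarith
  -- g is τ-continuous
  have hgτ : @Continuous X ℝ τ _ ⇑g := by
    refine @cont_of_bounded_on_nhd X _ _ τ haddgrp hsmul g W hWn ε hε.le ?_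
    intro x hx
    exact le_trans (hgabs x) (mul_le_of_le_one_right hε.le (gauge_le_one_of_mem hx))
  have hgnorm : @Continuous X ℝ UniformSpace.toTopologicalSpace _ ⇑g :=
    continuous_le_dom hcoarser hgτ
  refine ⟨mkDual g hgnorm, ?_, ?_⟩
  · show @Continuous X ℝ τ _ ⇑(mkDual g hgnorm)
    rw [mkDual_coe]
    exact hgτ
  · have hd : dist f (mkDual g hgnorm) ≤ ε := by
      refine dist_le_of_forall _ _ hε.le fun x => ?_
      have h1 : f x - (mkDual g hgnorm) x = h x := by
        rw [mkDual_coe]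
        have := hgh x
        have h2 : (f : X →ₗ[ℝ] ℝ) x = f x := rfl
        rw [h2] at this
        linarith
      rw [h1]
      exact hhabs x
    calc dist f (mkDual g hgnorm) ≤ ε := hd
      _ < ε₀ := by rw [hεdef]; linarith

end MixedAux

/-- The dual of `(X,γ)` for the mixed topology `γ = γ(‖·‖,τ)` is the norm-closure in `X'`
of the dual of `(X,τ)`; in particular it is a norm-closed subspace of `X'`. -/
theorem mixedTopology_dual_eq_closure
    {X : Type*} [NormedAddCommGroup X] [NormedSpace ℝ X] [CompleteSpace X]
    (τ γ : TopologicalSpace X)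
    (hcoarser : (UniformSpace.toTopologicalSpace : TopologicalSpace X) ≤ τ)
    (ht2 : @T2Space X τ) (haddgrp : @IsTopologicalAddGroup X τ _)
    (hsmul : @ContinuousSMul ℝ X _ _ τ) (hlc : @LocallyConvexSpace ℝ X _ _ _ _ τ)
    (hmix : IsMixedTopology X τ γ) :
    {f : wDualR X | @Continuous X ℝ γ _ ⇑f} =
        closure {f : wDualR X | @Continuous X ℝ τ _ ⇑f} ∧
      IsClosed {f : wDualR X | @Continuous X ℝ γ _ ⇑f} := by
  have hsub : {f : wDualR X | @Continuous X ℝ τ _ ⇑f} ⊆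
      {f : wDualR X | @Continuous X ℝ γ _ ⇑f} :=
    fun f hf => continuous_le_dom hmix.le_tau hf
  have hclosed := MixedAux.gammaDual_isClosed τ γ hmix
  refine ⟨Set.Subset.antisymm ?_ (closure_minimal hsub hclosed), hclosed⟩
  intro f hf
  exact MixedAux.gammaDual_subset_closure τ γ hcoarser haddgrp hsmul hlc hmix f hf

end
end
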